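/- For a differentiated queue history h, there exists a data value x such that: Enq(x) does not happen-after any operation, Deq(x) exists and does not happen-after Enq(x), and Deq(x) does not happen-after any other Deq operation — only if h is linearizable with respect to the set of sequential words of the form Enq(x) · u1 · Deq(x) · u2 where u1 contains no Deq events. (Formally: the stated order constraints on x, combined with the interval-order happens-before of h, admit a linearization placing Enq(x) first and Deq(x) before all other dequeues.) -/

import Mathlib

attribute [local instance] Classical.propDecidable

/-- Operations of a queue history: enqueues and dequeues of data values
(natural numbers), and empty-dequeues (tagged by an identifier). -/
inductive QOp : Type
  | enq (d : ℕ)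
  | deq (d : ℕ)
  | deqEmpty (i : ℕ)
deriving DecidableEq

/-- A differentiated queue history: a finite set of operations (each operation
occurs at most once, so each data value is used at most once) together with a
happens-before relation that is a strict interval order. -/
structure QHistory where
  ops : Finset QOp
  hb : QOp → QOp → Prop
  hb_irrefl : ∀ o, ¬ hb o o
  hb_trans : ∀ a b c, hb a b → hb b c → hb a c
  interval : ∀ a b c d, hb a b → hb c d → hb a d ∨ hb c b

/-- `u` is a linearization of the history `h`: it enumerates exactly the
operations of `h` in an order extending happens-before. -/
def QHistory.Linearizes (h : QHistory) (u : List QOp) : Prop :=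
  u.Nodup ∧ (∀ o, o ∈ u ↔ o ∈ h.ops) ∧ u.Pairwise (fun a b => ¬ h.hb b a)

/-- `h` is linearizable with respect to the set of sequential words `M`. -/
def LinearizableSet (h : QHistory) (M : List QOp → Prop) : Prop :=
  ∃ u, M u ∧ h.Linearizes u

def noDeq (u : List QOp) : Prop := ∀ d, QOp.deq d ∉ u

def noUnmatchedEnq (u : List QOp) : Prop := ∀ d, QOp.enq d ∈ u → QOp.deq d ∈ u

/-- Matching set of the rule R_EnqDeq with witness `x`:
words `Enq(x) · u1 · Deq(x) · u2` where `u1` contains no dequeue. -/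
def MatchEnqDeqW (x : ℕ) (w : List QOp) : Prop :=
  ∃ u1 u2, w = QOp.enq x :: u1 ++ QOp.deq x :: u2 ∧ noDeq u1

/-- Matching set of R_EnqDeq (some witness). -/
def MatchEnqDeq (w : List QOp) : Prop := ∃ x, MatchEnqDeqW x w

/-- Data values occurring in a history. -/
def QHistory.dom (h : QHistory) : Set ℕ :=
  {d | QOp.enq d ∈ h.ops ∨ QOp.deq d ∈ h.ops}

def QOp.keep (D K : Set ℕ) : QOp → Prop
  | .enq d => d ∈ D
  | .deq d => d ∈ D
  | .deqEmpty i => i ∈ K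

/-- Projection of a history onto the data values in `D`, keeping the
empty-dequeue operations with identifiers in `K`. -/
noncomputable def QHistory.proj (h : QHistory) (D K : Set ℕ) : QHistory :=
  { h with ops := h.ops.filter (QOp.keep D K) }

/-- Remove all operations on the data value `x`. -/
noncomputable def QHistory.removeVal (h : QHistory) (x : ℕ) : QHistory :=
  { h with ops := h.ops.filter (fun o => o ≠ QOp.enq x ∧ o ≠ QOp.deq x) }

/-- Data values occurring in a sequential word. -/
def wordVals (u : List QOp) : Set ℕ := {d | QOp.enq d ∈ u ∨ QOp.deq d ∈ u}

lemma qop_exists_minimal (R : QOp → QOp → Prop) (hirr : ∀ a, ¬ R a a)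
    (htr : ∀ a b c, R a b → R b c → R a c) :
    ∀ s : Finset QOp, s.Nonempty → ∃ m ∈ s, ∀ b ∈ s, ¬ R b m := by
  intro s
  induction s using Finset.induction with
  | empty => intro hne; exact absurd hne (by simp)
  | @insert a s ha ih =>
    intro _
    rcases s.eq_empty_or_nonempty with rfl | hne
    · exact ⟨a, by simp, by simpa using hirr a⟩
    · obtain ⟨m, hm, hmin⟩ := ih hne
      by_cases hRam : R a m
      · refine ⟨a, Finset.mem_insert_self a s, ?_⟩
        intro b hb
        rcases Finset.mem_insert.1 hb with rfl | hb
        · exact hirr b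
        · intro hRba; exact hmin b hb (htr b a m hRba hRam)
      · refine ⟨m, Finset.mem_insert_of_mem hm, ?_⟩
        intro b hb
        rcases Finset.mem_insert.1 hb with rfl | hb
        · exact hRam
        · exact hmin b hb

lemma qop_topo_sort (R : QOp → QOp → Prop) (hirr : ∀ a, ¬ R a a)
    (htr : ∀ a b c, R a b → R b c → R a c) :
    ∀ s : Finset QOp, ∃ L : List QOp, L.Nodup ∧ (∀ o, o ∈ L ↔ o ∈ s) ∧
      L.Pairwise (fun a b => ¬ R b a) := by
  intro s
  induction s using Finset.strongInduction with
  | _ s ih =>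
    rcases s.eq_empty_or_nonempty with rfl | hne
    · exact ⟨[], by simp⟩
    · obtain ⟨m, hm, hmin⟩ := qop_exists_minimal R hirr htr s hne
      obtain ⟨L, hnd, hmem, hpw⟩ := ih (s.erase m) (Finset.erase_ssubset hm)
      refine ⟨m :: L, ?_, ?_, ?_⟩
      · refine List.nodup_cons.2 ⟨fun hmL => ?_, hnd⟩
        exact (Finset.notMem_erase m s) ((hmem m).1 hmL)
      · intro o
        simp only [List.mem_cons, hmem, Finset.mem_erase]
        constructor
        · rintro (rfl | ⟨-, h⟩)
          · exact hm
          · exact h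
        · intro hos
          by_cases hom : o = m
          · exact Or.inl hom
          · exact Or.inr ⟨hom, hos⟩
      · refine List.pairwise_cons.2 ⟨?_, hpw⟩
        intro b hb
        exact hmin b (Finset.mem_of_mem_erase ((hmem b).1 hb))

/-- if some value `x` has its enqueue minimal (it happens-after no
operation), its dequeue exists and does not happen-after `Enq(x)`, and its
dequeue happens-after no other dequeue, then `h` is linearizable with respect
to the words `Enq(x) · u1 · Deq(x) · u2` with no dequeue in `u1`. -/
theorem queue_enqdeq_compatible (h : QHistory)
    (hnoE : ∀ i, QOp.deqEmpty i ∉ h.ops)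
    (x : ℕ) (henq : QOp.enq x ∈ h.ops) (hdeq : QOp.deq x ∈ h.ops)
    (hEnqMin : ∀ o ∈ h.ops, ¬ h.hb o (QOp.enq x))
    (hDeqNotAfterEnq : ¬ h.hb (QOp.enq x) (QOp.deq x))
    (hDeqMin : ∀ d, d ≠ x → QOp.deq d ∈ h.ops → ¬ h.hb (QOp.deq d) (QOp.deq x)) :
    LinearizableSet h (MatchEnqDeqW x) := by
  classical
  -- auxiliary predicates
  set A : QOp → Prop := fun a => a = QOp.deq x ∨ h.hb a (QOp.deq x) with hA
  set B : QOp → Prop := fun b => ∃ d, d ≠ x ∧ QOp.deq d ∈ h.ops ∧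
      (b = QOp.deq d ∨ h.hb (QOp.deq d) b) with hB
  set R : QOp → QOp → Prop := fun a b => h.hb a b ∨ (A a ∧ B b) with hR
  have hirr : ∀ a, ¬ R a a := by
    rintro a (hhb | ⟨ha, d, hdx, hdops, hbd⟩)
    · exact h.hb_irrefl a hhb
    · rcases ha with rfl | ha
      · rcases hbd with heq | hhb
        · exact hdx (by injection heq.symm)
        · exact hDeqMin d hdx hdops hhb
      · rcases hbd with rfl | hhb
        · exact hDeqMin d hdx hdops ha
        · exact hDeqMin d hdx hdops (h.hb_trans _ _ _ hhb ha)
  have htr : ∀ a b c, R a b → R b c → R a c := by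
    rintro a b c (hab | ⟨hAa, hBb⟩) (hbc | ⟨hAb, hBc⟩)
    · exact Or.inl (h.hb_trans _ _ _ hab hbc)
    · refine Or.inr ⟨?_, hBc⟩
      rcases hAb with rfl | hb
      · exact Or.inr hab
      · exact Or.inr (h.hb_trans _ _ _ hab hb)
    · refine Or.inr ⟨hAa, ?_⟩
      obtain ⟨d, hdx, hdops, hbd⟩ := hBb
      rcases hbd with rfl | hhb
      · exact ⟨d, hdx, hdops, Or.inr hbc⟩
      · exact ⟨d, hdx, hdops, Or.inr (h.hb_trans _ _ _ hhb hbc)⟩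
    · exact Or.inr ⟨hAa, hBc⟩
  obtain ⟨L, hnd, hmem, hpw⟩ :=
    qop_topo_sort R hirr htr (h.ops.erase (QOp.enq x))
  have hLops : ∀ o ∈ L, o ∈ h.ops := fun o ho =>
    Finset.mem_of_mem_erase ((hmem o).1 ho)
  have hdeqL : QOp.deq x ∈ L := (hmem _).2 (Finset.mem_erase.2 ⟨by simp, hdeq⟩)
  obtain ⟨u1, u2, hsplit⟩ := List.append_of_mem hdeqL
  refine ⟨QOp.enq x :: L, ⟨u1, u2, by simp [hsplit], ?_⟩, ?_, ?_, ?_⟩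
  · -- noDeq u1
    intro d hd
    have hpw' := hsplit ▸ hpw
    have := (List.pairwise_append.1 hpw').2.2 (QOp.deq d) hd (QOp.deq x)
      (List.mem_cons_self)
    apply this
    have hdops : QOp.deq d ∈ h.ops := hLops _ (hsplit ▸ (by simp [hd]))
    have hdx : d ≠ x := by
      rintro rfl
      have := hsplit ▸ hnd
      rw [List.nodup_append] at this
      exact this.2.2 _ hd _ List.mem_cons_self rfl
    exact Or.inr ⟨Or.inl rfl, d, hdx, hdops, Or.inl rfl⟩
  · -- Nodup
    refine List.nodup_cons.2 ⟨fun hc => ?_, hnd⟩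
    exact (Finset.notMem_erase _ _) ((hmem _).1 hc)
  · -- membership
    intro o
    simp only [List.mem_cons, hmem, Finset.mem_erase]
    constructor
    · rintro (rfl | ⟨-, ho⟩)
      · exact henq
      · exact ho
    · intro ho
      by_cases hoe : o = QOp.enq x
      · exact Or.inl hoe
      · exact Or.inr ⟨hoe, ho⟩
  · -- pairwise
    refine List.pairwise_cons.2 ⟨?_, ?_⟩
    · intro b hb
      exact hEnqMin b (hLops b hb)
    · exact hpw.imp (fun {a b} hnR hhb => hnR (Or.inl hhb))
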